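/- For -1/2 < λ < 0 and real n ≥ 1, the partial derivative of g(n,λ) = 2·ln((n+1)(n+2λ+1)/(n+λ+1)²) - λ·ln(n(n+2λ+1)/((n+1)(n+2λ))) with respect to n equals -2λ²(3n + 2λ² + 3λ + 1)/(n(n+1)(n+λ+1)(n+2λ)(n+2λ+1)), and this is negative. -/

import Mathlib

theorem g_derivative
    (l : ℝ) (hl1 : -1/2 < l) (hl2 : l < 0) (n : ℝ) (hn : 1 ≤ n) :
    HasDerivAt (fun m : ℝ =>
        2 * Real.log ((m + 1) * (m + 2 * l + 1) / (m + l + 1) ^ 2)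
          - l * Real.log (m * (m + 2 * l + 1) / ((m + 1) * (m + 2 * l))))
      (-2 * l ^ 2 * (3 * n + 2 * l ^ 2 + 3 * l + 1)
        / (n * (n + 1) * (n + l + 1) * (n + 2 * l) * (n + 2 * l + 1))) n ∧
    -2 * l ^ 2 * (3 * n + 2 * l ^ 2 + 3 * l + 1)
        / (n * (n + 1) * (n + l + 1) * (n + 2 * l) * (n + 2 * l + 1)) < 0 := by
  have h0 : (0:ℝ) < n := by linarith
  have h1 : (0:ℝ) < n + 1 := by linarith
  have h2 : (0:ℝ) < n + l + 1 := by linarith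
  have h3 : (0:ℝ) < n + 2 * l := by linarith
  have h4 : (0:ℝ) < n + 2 * l + 1 := by linarith
  have h5 : (0:ℝ) < 3 * n + 2 * l ^ 2 + 3 * l + 1 := by nlinarith
  have du1 : HasDerivAt (fun m : ℝ => (m + 1) * (m + 2 * l + 1))
      (1 * (n + 2 * l + 1) + (n + 1) * 1) n :=
    (((hasDerivAt_id n).add_const 1).mul (((hasDerivAt_id n).add_const (2 * l)).add_const 1))
  have dv1 : HasDerivAt (fun m : ℝ => (m + l + 1) ^ 2)
      (2 * (n + l + 1) ^ 1 * 1) n := by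
    simpa using (((hasDerivAt_id n).add_const l).add_const 1).fun_pow 2
  have hv1 : (n + l + 1) ^ 2 ≠ 0 := by positivity
  have df1 := du1.fun_div dv1 hv1
  have hf1 : (n + 1) * (n + 2 * l + 1) / (n + l + 1) ^ 2 ≠ 0 := by positivity
  have dlog1 := df1.log hf1
  have du2 : HasDerivAt (fun m : ℝ => m * (m + 2 * l + 1))
      (1 * (n + 2 * l + 1) + n * 1) n :=
    ((hasDerivAt_id n).mul (((hasDerivAt_id n).add_const (2 * l)).add_const 1))
  have dv2 : HasDerivAt (fun m : ℝ => (m + 1) * (m + 2 * l))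
      (1 * (n + 2 * l) + (n + 1) * 1) n :=
    (((hasDerivAt_id n).add_const 1).mul ((hasDerivAt_id n).add_const (2 * l)))
  have hv2 : (n + 1) * (n + 2 * l) ≠ 0 := by positivity
  have df2 := du2.fun_div dv2 hv2
  have hf2 : n * (n + 2 * l + 1) / ((n + 1) * (n + 2 * l)) ≠ 0 := by positivity
  have dlog2 := df2.log hf2
  constructor
  · have := (dlog1.const_mul 2).fun_sub (dlog2.const_mul l)
    convert this using 1
    · rfl
    · rfl
    field_simp
    ring
  · apply div_neg_of_neg_of_pos
    · nlinarith
    · positivity
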